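/- For any state s of an Aho–Corasick automaton, h(s) = { k : P_k ∈ D and P_k is a suffix of φ(s) }; i.e., the union of outputs collected along the failure-link chain from s equals exactly the set of patterns that are suffixes of φ(s). -/

import Mathlib

lemma suffix_comp {α : Type*} {a b c : List α} (h1 : a <:+ c) (h2 : b <:+ c)
    (h : a.length ≤ b.length) : a <:+ b := by
  rw [← List.reverse_prefix] at h1 h2 ⊢
  exact List.prefix_of_prefix_length_le h1 h2 (by simpa using h)

/-- For any state `u`, the union of outputs collected along the
failure-link chain from `u` equals exactly the set of patterns that are
suffixes of `φ(u)`: `h(u) = {k | P k <:+ u}`. States are identified with the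
strings (prefixes of patterns) they represent; one failure step relates `a` to
`f a` for nonempty `a`. -/
theorem stmt9 {α ι : Type*} (P : ι → List α)
    (f : List α → List α)
    (St : Set (List α)) (hSt : St = {u | ∃ k, u <+: P k})
    (hf : ∀ u ∈ St, u ≠ [] → f u ∈ St ∧ f u <:+ u ∧ f u ≠ u ∧
      ∀ v ∈ St, v <:+ u → v ≠ u → v.length ≤ (f u).length)
    (u : List α) (hu : u ∈ St) :
    {k | ∃ t, Relation.ReflTransGen (fun a b => a ≠ [] ∧ b = f a) u t ∧ P k = t} =
      {k | P k <:+ u} := by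
  ext k
  simp only [Set.mem_setOf_eq]
  constructor
  · rintro ⟨t, ht, rfl⟩
    have key : ∀ t, Relation.ReflTransGen (fun a b => a ≠ [] ∧ b = f a) u t →
        t ∈ St ∧ t <:+ u := by
      intro t ht
      induction ht with
      | refl => exact ⟨hu, List.suffix_refl u⟩
      | tail hab hbc ih =>
        obtain ⟨hb, rfl⟩ := hbc
        obtain ⟨hbSt, hbsuf⟩ := ih
        obtain ⟨h1, h2, _, _⟩ := hf _ hbSt hb
        exact ⟨h1, h2.trans hbsuf⟩
    exact (key _ ht).2
  · intro hk
    have hPk : P k ∈ St := by rw [hSt]; exact ⟨k, List.prefix_refl _⟩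
    have main : ∀ n u, u.length ≤ n → u ∈ St → P k <:+ u →
        ∃ t, Relation.ReflTransGen (fun a b => a ≠ [] ∧ b = f a) u t ∧ P k = t := by
      intro n
      induction n with
      | zero =>
        intro u hlen _ hsuf
        have hu0 : u = [] := List.length_eq_zero_iff.mp (Nat.le_zero.mp hlen)
        subst hu0
        exact ⟨[], Relation.ReflTransGen.refl, List.suffix_nil.mp hsuf⟩
      | succ n ih =>
        intro u hlen huSt hsuf
        rcases eq_or_ne (P k) u with h | h
        · exact ⟨u, Relation.ReflTransGen.refl, h⟩
        · have hne : u ≠ [] := by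
            rintro rfl
            exact h (List.suffix_nil.mp hsuf)
          obtain ⟨h1, h2, h3, h4⟩ := hf u huSt hne
          have hlenle : (P k).length ≤ (f u).length := h4 _ hPk hsuf h
          have hsuf' : P k <:+ f u := suffix_comp hsuf h2 hlenle
          have hflen : (f u).length ≤ n := by
            have := List.IsSuffix.length_le h2
            have hlt : (f u).length < u.length :=
              lt_of_le_of_ne this (fun he => h3 (List.IsSuffix.eq_of_length h2 he))
            omega
          obtain ⟨t, htc, hte⟩ := ih (f u) hflen h1 hsuf'
          exact ⟨t, Relation.ReflTransGen.head ⟨hne, rfl⟩ htc, hte⟩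
    exact main u.length u le_rfl hu hk
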